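/- Fix ρ̄ ∈ (0,1) and u₀ ∈ ℝ^n. There exists a constant C ≥ 0, depending only on n, A, |u₀|, L_f, C_f, L_g, C_g, γ, γ_A', γ_B, ‖η‖_γ^−, ‖ξ‖_γ^− and ρ̄, such that for every ε > 0 with εγ_A' < γ and ρ(ε) := εL_f/(γ − εγ_A') + L_g/(γ_B − γ) ≤ ρ̄, the u-component u^ε(·;u₀) of the unique fixed point of the Lyapunov–Perron map satisfies sup_{t≤0} e^{γt}|u^ε(t;u₀) − u₀| ≤ C·ε. -/

import Mathlib

open MeasureTheory Set Filter

noncomputable section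

/-- `ℝ^n` with the Euclidean norm. -/
abbrev Vec (n : ℕ) := EuclideanSpace ℝ (Fin n)

/-- Action of an `n × n` real matrix on `ℝ^n`. -/
noncomputable def mApply {n : ℕ} (M : Matrix (Fin n) (Fin n) ℝ) (x : Vec n) : Vec n :=
  Matrix.toEuclideanLin M x

/-- The matrix exponential `e^{tA}`. -/
noncomputable def expM {n : ℕ} (A : Matrix (Fin n) (Fin n) ℝ) (t : ℝ) :
    Matrix (Fin n) (Fin n) ℝ :=
  NormedSpace.exp (t • A)

/-- The norm `‖u‖_γ^- = sup_{t ≤ 0} e^{γ t} ‖u t‖` on `C_γ^-`. -/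
noncomputable def cNorm {n : ℕ} (γ : ℝ) (u : ℝ → Vec n) : ℝ :=
  sSup ((fun t => Real.exp (γ * t) * ‖u t‖) '' Iic (0:ℝ))

/-- Membership in the Banach space `C_γ^-`: continuity on `(-∞, 0]` together with
finiteness of the norm `sup_{t ≤ 0} e^{γ t} ‖u t‖`. -/
def memCneg {n : ℕ} (γ : ℝ) (u : ℝ → Vec n) : Prop :=
  ContinuousOn u (Iic 0) ∧
    BddAbove ((fun t => Real.exp (γ * t) * ‖u t‖) '' Iic (0:ℝ))

/-- The `A`-component of the Lyapunov–Perron map: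
`K_A^ε(Φ)(t) = e^{εAt} u₀ + ε ∫_0^t e^{εA(t-s)} f(u(s)+η(s), v(s)+ξ(s)) ds`. -/
noncomputable def KA {n : ℕ} (A : Matrix (Fin n) (Fin n) ℝ) (ε : ℝ) (u₀ : Vec n)
    (f : Vec n → Vec n → Vec n) (η ξ u v : ℝ → Vec n) (t : ℝ) : Vec n :=
  mApply (expM A (ε * t)) u₀ +
    ε • ∫ s in (0:ℝ)..t, mApply (expM A (ε * (t - s))) (f (u s + η s) (v s + ξ s))

/-- The `B`-component of the Lyapunov–Perron map:
`K_B^ε(Φ)(t) = ∫_{-∞}^t e^{B(t-s)} g(u(s)+η(s), v(s)+ξ(s)) ds`. -/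
noncomputable def KB {n : ℕ} (B : Matrix (Fin n) (Fin n) ℝ)
    (g : Vec n → Vec n → Vec n) (η ξ u v : ℝ → Vec n) (t : ℝ) : Vec n :=
  ∫ s in Iic t, mApply (expM B (t - s)) (g (u s + η s) (v s + ξ s))

/-- `(u, v)` is a fixed point of the Lyapunov–Perron map in `C_γ^-`, with forcings
`(η, ξ)` and initial value `u₀` (the fixed-point equations are required on `(-∞, 0]`,
with the improper integral in the `B`-component converging absolutely). -/
def IsLPFixedPt {n : ℕ} (γ : ℝ) (A B : Matrix (Fin n) (Fin n) ℝ) (ε : ℝ)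
    (f g : Vec n → Vec n → Vec n) (η ξ : ℝ → Vec n) (u₀ : Vec n)
    (u v : ℝ → Vec n) : Prop :=
  memCneg γ u ∧ memCneg γ v ∧
    (∀ t ≤ (0:ℝ), u t = KA A ε u₀ f η ξ u v t) ∧
    (∀ t ≤ (0:ℝ),
      IntegrableOn (fun s => mApply (expM B (t - s)) (g (u s + η s) (v s + ξ s)))
          (Iic t) volume ∧
        v t = KB B g η ξ u v t)

section Aux

attribute [local instance] Matrix.linftyOpNormedRing Matrix.linftyOpNormedAlgebra
  Matrix.linftyOpNormedAddCommGroup Matrix.linftyOpNormedSpace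

variable {n : ℕ}

lemma mApply_mul (M N : Matrix (Fin n) (Fin n) ℝ) (x : Vec n) :
    mApply (M * N) x = mApply M (mApply N x) := by
  simp [mApply, Matrix.toEuclideanLin_apply, Equiv.apply_symm_apply, Matrix.mulVec_mulVec]

lemma mApply_one (x : Vec n) : mApply 1 x = x := by
  simp [mApply, Matrix.toEuclideanLin_apply, Matrix.one_mulVec]

lemma expM_zero (A : Matrix (Fin n) (Fin n) ℝ) : expM A 0 = 1 := by
  simp [expM, NormedSpace.exp_zero]

lemma continuous_mApply2 :
    Continuous (fun p : Matrix (Fin n) (Fin n) ℝ × Vec n => mApply p.1 p.2) := by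
  have h1 : Continuous (fun p : Matrix (Fin n) (Fin n) ℝ × Vec n =>
      Matrix.mulVec p.1 ((WithLp.equiv 2 (Fin n → ℝ)) p.2)) := by
    refine continuous_pi fun i => ?_
    simp only [Matrix.mulVec, dotProduct]
    refine continuous_finset_sum _ fun j _ => ?_
    exact ((continuous_apply j).comp ((continuous_apply i).comp continuous_fst)).mul
      ((continuous_apply j).comp
        ((PiLp.continuous_ofLp 2 (fun _ : Fin n => ℝ)).comp continuous_snd))
  exact (PiLp.continuous_toLp 2 (fun _ : Fin n => ℝ)).comp h1

lemma continuous_expM (A : Matrix (Fin n) (Fin n) ℝ) : Continuous (expM A) :=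
  NormedSpace.exp_continuous.comp (continuous_id.smul continuous_const)

/-- `mApply · x` as a linear map in the matrix. -/
def mApplyL (x : Vec n) : Matrix (Fin n) (Fin n) ℝ →ₗ[ℝ] Vec n where
  toFun M := mApply M x
  map_add' M N := by simp [mApply, map_add, LinearMap.add_apply]
  map_smul' c M := by simp [mApply, _root_.map_smul, LinearMap.smul_apply]

lemma hasDerivAt_mApply_expM (A : Matrix (Fin n) (Fin n) ℝ) (ε : ℝ) (x : Vec n) (s : ℝ) :
    HasDerivAt (fun r : ℝ => mApply (expM A (ε * r)) x)
      (ε • mApply (expM A (ε * s)) (mApply A x)) s := by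
  have h1 : HasDerivAt (fun r : ℝ => NormedSpace.exp (r • A))
      (NormedSpace.exp ((ε * s) • A) * A) (ε * s) :=
    hasDerivAt_exp_smul_const A (ε * s)
  have h2 : HasDerivAt (fun r : ℝ => ε * r) ε s := by
    simpa using (hasDerivAt_id s).const_mul ε
  have h3 : HasDerivAt (fun r : ℝ => NormedSpace.exp ((ε * r) • A))
      (ε • (NormedSpace.exp ((ε * s) • A) * A)) s := h1.scomp s h2
  have h4 := ((mApplyL x).toContinuousLinearMap).hasFDerivAt.comp_hasDerivAt s h3
  have h5 : (mApplyL x).toContinuousLinearMap (ε • (NormedSpace.exp ((ε * s) • A) * A)) =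
      ε • mApply (expM A (ε * s)) (mApply A x) := by
    rw [_root_.map_smul]
    congr 1
    show mApply (NormedSpace.exp ((ε * s) • A) * A) x = _
    rw [mApply_mul]; rfl
  exact h4.congr_deriv h5

end Aux

section Aux2

variable {n : ℕ}

lemma le_cNorm {γ : ℝ} {u : ℝ → Vec n}
    (hu : BddAbove ((fun t => Real.exp (γ * t) * ‖u t‖) '' Iic (0:ℝ))) {t : ℝ} (ht : t ≤ 0) :
    Real.exp (γ * t) * ‖u t‖ ≤ cNorm γ u :=
  le_csSup hu ⟨t, ht, rfl⟩

lemma cNorm_nonneg {γ : ℝ} {u : ℝ → Vec n}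
    (hu : BddAbove ((fun t => Real.exp (γ * t) * ‖u t‖) '' Iic (0:ℝ))) :
    0 ≤ cNorm γ u :=
  le_trans (by positivity) (le_cNorm hu le_rfl)

lemma norm_le_cNorm {γ : ℝ} {u : ℝ → Vec n}
    (hu : BddAbove ((fun t => Real.exp (γ * t) * ‖u t‖) '' Iic (0:ℝ))) {t : ℝ} (ht : t ≤ 0) :
    ‖u t‖ ≤ cNorm γ u * Real.exp (-(γ * t)) := by
  have h := le_cNorm hu ht
  calc ‖u t‖ = Real.exp (-(γ * t)) * (Real.exp (γ * t) * ‖u t‖) := by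
        rw [← mul_assoc, ← Real.exp_add]; simp
    _ ≤ Real.exp (-(γ * t)) * cNorm γ u :=
        mul_le_mul_of_nonneg_left h (Real.exp_pos _).le
    _ = cNorm γ u * Real.exp (-(γ * t)) := mul_comm _ _

lemma continuous_of_lip {f : Vec n → Vec n → Vec n} {L : ℝ} (hL : 0 < L)
    (hf : ∀ x₁ y₁ x₂ y₂ : Vec n, ‖f x₁ y₁ - f x₂ y₂‖ ≤ L * (‖x₁ - x₂‖ + ‖y₁ - y₂‖)) :
    Continuous fun p : Vec n × Vec n => f p.1 p.2 := by
  have hlip : LipschitzWith (Real.toNNReal (2 * L)) (fun p : Vec n × Vec n => f p.1 p.2) := by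
    refine LipschitzWith.of_dist_le_mul fun p q => ?_
    have h := hf p.1 p.2 q.1 q.2
    rw [Real.coe_toNNReal _ (by linarith), dist_eq_norm, Prod.dist_eq]
    have h1 : ‖p.1 - q.1‖ ≤ max (dist p.1 q.1) (dist p.2 q.2) := by
      rw [← dist_eq_norm]; exact le_max_left _ _
    have h2 : ‖p.2 - q.2‖ ≤ max (dist p.1 q.1) (dist p.2 q.2) := by
      rw [← dist_eq_norm]; exact le_max_right _ _
    have h3 : (0:ℝ) ≤ max (dist p.1 q.1) (dist p.2 q.2) :=
      le_trans dist_nonneg (le_max_left _ _)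
    calc ‖f p.1 p.2 - f q.1 q.2‖ ≤ L * (‖p.1 - q.1‖ + ‖p.2 - q.2‖) := h
      _ ≤ 2 * L * max (dist p.1 q.1) (dist p.2 q.2) := by nlinarith
  exact hlip.continuous

lemma integral_exp_mul_ab {c : ℝ} (hc : c ≠ 0) (a b : ℝ) :
    ∫ s in a..b, Real.exp (c * s) = (Real.exp (c * b) - Real.exp (c * a)) / c := by
  have hd : ∀ s : ℝ, HasDerivAt (fun r => Real.exp (c * r) / c) (Real.exp (c * s)) s := by
    intro s
    have h1 : HasDerivAt (fun r : ℝ => c * r) c s := by simpa using (hasDerivAt_id s).const_mul c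
    have h2 := (Real.hasDerivAt_exp (c * s)).comp s h1
    have h3 := h2.div_const c
    simpa [mul_comm, mul_div_assoc, mul_div_cancel_left₀ _ hc] using h3
  rw [intervalIntegral.integral_eq_sub_of_hasDerivAt (fun s _ => hd s)
    ((Real.continuous_exp.comp (continuous_const.mul continuous_id)).intervalIntegrable a b)]
  ring

lemma integrableOn_exp_mul_Iic' {c : ℝ} (hc : 0 < c) (t : ℝ) :
    IntegrableOn (fun s => Real.exp (c * s)) (Iic t) := by
  have hcont : Continuous fun s : ℝ => Real.exp (c * s) :=
    Real.continuous_exp.comp (continuous_const.mul continuous_id)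
  refine integrableOn_Iic_of_intervalIntegral_norm_bounded (Real.exp (c * t) / c) t
    (fun i => hcont.integrableOn_Ioc) tendsto_id ?_
  filter_upwards [eventually_le_atBot t] with y hy
  have hn : ∀ x : ℝ, ‖Real.exp (c * x)‖ = Real.exp (c * x) :=
    fun x => Real.norm_of_nonneg (Real.exp_pos _).le
  simp_rw [hn, id_eq, integral_exp_mul_ab hc.ne']
  have h1 := (Real.exp_pos (c * y)).le
  rw [div_le_div_iff_of_pos_right hc]
  linarith

lemma integral_exp_mul_Iic' {c : ℝ} (hc : 0 < c) (t : ℝ) :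
    ∫ s in Iic t, Real.exp (c * s) = Real.exp (c * t) / c := by
  refine tendsto_nhds_unique
    (intervalIntegral_tendsto_integral_Iic t (integrableOn_exp_mul_Iic' hc t) tendsto_id) ?_
  have h1 : Tendsto (fun y : ℝ => c * y) atBot atBot := Tendsto.const_mul_atBot hc tendsto_id
  have h2 : Tendsto (fun y : ℝ => Real.exp (c * y)) atBot (nhds 0) :=
    Real.tendsto_exp_atBot.comp h1
  have h3 : Tendsto (fun y : ℝ => (Real.exp (c * t) - Real.exp (c * y)) / c) atBot
      (nhds ((Real.exp (c * t) - 0) / c)) := (tendsto_const_nhds.sub h2).div_const c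
  rw [sub_zero] at h3
  exact h3.congr fun y => (integral_exp_mul_ab hc.ne' y t).symm

/-- Interval estimate with kernel `K e^{c (t - s)}`. -/
lemma key_interval {F : ℝ → Vec n} {t c K : ℝ} (ht : t ≤ 0) (hc : 0 < c) (hK : 0 ≤ K)
    (hFc : ContinuousOn F (Icc t 0))
    (hb : ∀ s ∈ Icc t 0, ‖F s‖ ≤ K * Real.exp (c * (t - s))) :
    ‖∫ s in t..0, F s‖ ≤ K / c := by
  have hFi : IntervalIntegrable F volume t 0 := by
    rw [intervalIntegrable_iff_integrableOn_Icc_of_le ht]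
    exact hFc.integrableOn_compact isCompact_Icc
  have hGc : Continuous fun s : ℝ => K * Real.exp (c * (t - s)) := by fun_prop
  have hGi : IntervalIntegrable (fun s : ℝ => K * Real.exp (c * (t - s))) volume t 0 :=
    hGc.intervalIntegrable t 0
  have h1 : ‖∫ s in t..0, F s‖ ≤ ∫ s in t..0, ‖F s‖ :=
    intervalIntegral.norm_integral_le_integral_norm ht
  have h2 : ∫ s in t..0, ‖F s‖ ≤ ∫ s in t..0, K * Real.exp (c * (t - s)) :=
    intervalIntegral.integral_mono_on ht hFi.norm hGi hb
  have h3 : ∫ s in t..0, K * Real.exp (c * (t - s))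
      = K * Real.exp (c * t) * ((Real.exp (-c * 0) - Real.exp (-c * t)) / (-c)) := by
    rw [show (fun s : ℝ => K * Real.exp (c * (t - s))) = fun s : ℝ =>
      (K * Real.exp (c * t)) * Real.exp ((-c) * s) from funext fun s => by
        rw [mul_assoc, ← Real.exp_add]; ring_nf]
    rw [intervalIntegral.integral_const_mul, integral_exp_mul_ab (neg_ne_zero.2 hc.ne')]
  have h4 : K * Real.exp (c * t) * ((Real.exp (-c * 0) - Real.exp (-c * t)) / (-c)) ≤ K / c := by
    have e1 : Real.exp (-c * 0) = 1 := by norm_num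
    have e2 : Real.exp (c * t) * Real.exp (-c * t) = 1 := by
      rw [← Real.exp_add]; ring_nf; exact Real.exp_zero
    have e3 : 0 < Real.exp (c * t) := Real.exp_pos _
    have e4 : Real.exp (c * t) ≤ 1 := by
      rw [show (1:ℝ) = Real.exp 0 from (Real.exp_zero).symm]
      exact Real.exp_le_exp.2 (by nlinarith)
    rw [e1]
    have h5 : K * Real.exp (c * t) * ((1 - Real.exp (-c * t)) / (-c))
        = K * (Real.exp (c * t) * Real.exp (-c * t) - Real.exp (c * t)) / c := by ring
    rw [h5, e2]
    have h6 : K * (1 - Real.exp (c * t)) ≤ K := by nlinarith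
    have h7 : K * (1 - Real.exp (c * t)) / c ≤ K / c := by gcongr
    exact h7
  linarith [h3 ▸ h2]

/-- Interval estimate with kernel `K e^{c s}`. -/
lemma key_interval' {F : ℝ → Vec n} {t c K : ℝ} (ht : t ≤ 0) (hc : 0 < c) (hK : 0 ≤ K)
    (hFc : ContinuousOn F (Icc t 0))
    (hb : ∀ s ∈ Icc t 0, ‖F s‖ ≤ K * Real.exp (c * s)) :
    ‖∫ s in t..0, F s‖ ≤ K / c := by
  have hFi : IntervalIntegrable F volume t 0 := by
    rw [intervalIntegrable_iff_integrableOn_Icc_of_le ht]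
    exact hFc.integrableOn_compact isCompact_Icc
  have hGc : Continuous fun s : ℝ => K * Real.exp (c * s) := by fun_prop
  have hGi : IntervalIntegrable (fun s : ℝ => K * Real.exp (c * s)) volume t 0 :=
    hGc.intervalIntegrable t 0
  have h1 : ‖∫ s in t..0, F s‖ ≤ ∫ s in t..0, ‖F s‖ :=
    intervalIntegral.norm_integral_le_integral_norm ht
  have h2 : ∫ s in t..0, ‖F s‖ ≤ ∫ s in t..0, K * Real.exp (c * s) :=
    intervalIntegral.integral_mono_on ht hFi.norm hGi hb
  have h3 : ∫ s in t..0, K * Real.exp (c * s)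
      = K * ((Real.exp (c * 0) - Real.exp (c * t)) / c) := by
    rw [intervalIntegral.integral_const_mul, integral_exp_mul_ab hc.ne']
  have h4 : K * ((Real.exp (c * 0) - Real.exp (c * t)) / c) ≤ K / c := by
    have e3 : 0 < Real.exp (c * t) := Real.exp_pos _
    rw [mul_zero, Real.exp_zero]
    have h6 : K * (1 - Real.exp (c * t)) ≤ K := by nlinarith
    have h7 : K * (1 - Real.exp (c * t)) / c ≤ K / c := by gcongr
    calc K * ((1 - Real.exp (c * t)) / c) = K * (1 - Real.exp (c * t)) / c := by ring
      _ ≤ K / c := h7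
  linarith [h3 ▸ h2]

/-- Iic estimate with kernel `K e^{b (s - t)} e^{-γ s}`. -/
lemma key_Iic {G : ℝ → Vec n} {t b γ K : ℝ} (hγ : 0 < γ) (hγb : γ < b) (hK : 0 ≤ K)
    (hGi : IntegrableOn G (Iic t) volume)
    (hb : ∀ s ≤ t, ‖G s‖ ≤ K * Real.exp (b * (s - t)) * Real.exp (-(γ * s))) :
    ‖∫ s in Iic t, G s‖ ≤ K * Real.exp (-(γ * t)) / (b - γ) := by
  have hd : 0 < b - γ := by linarith
  have hfun : ∀ s : ℝ, K * Real.exp (b * (s - t)) * Real.exp (-(γ * s))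
      = K * Real.exp (-(b * t)) * Real.exp ((b - γ) * s) := fun s => by
    rw [mul_assoc, mul_assoc, ← Real.exp_add, ← Real.exp_add]; ring_nf
  have hgi : IntegrableOn (fun s => K * Real.exp (-(b * t)) * Real.exp ((b - γ) * s)) (Iic t) :=
    (integrableOn_exp_mul_Iic' hd t).const_mul _
  have h1 : ‖∫ s in Iic t, G s‖
      ≤ ∫ s in Iic t, K * Real.exp (-(b * t)) * Real.exp ((b - γ) * s) := by
    refine norm_integral_le_of_norm_le hgi ?_
    refine (ae_restrict_iff' measurableSet_Iic).2 (ae_of_all _ fun s hs => ?_)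
    rw [← hfun s]; exact hb s hs
  have h2 : ∫ s in Iic t, K * Real.exp (-(b * t)) * Real.exp ((b - γ) * s)
      = K * Real.exp (-(b * t)) * (Real.exp ((b - γ) * t) / (b - γ)) := by
    rw [MeasureTheory.integral_const_mul, integral_exp_mul_Iic' hd t]
  have h3 : Real.exp (-(b * t)) * Real.exp ((b - γ) * t) = Real.exp (-(γ * t)) := by
    rw [← Real.exp_add]; ring_nf
  calc ‖∫ s in Iic t, G s‖ ≤ K * Real.exp (-(b * t)) * (Real.exp ((b - γ) * t) / (b - γ)) :=
        h2 ▸ h1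
    _ = K * (Real.exp (-(b * t)) * Real.exp ((b - γ) * t)) / (b - γ) := by ring
    _ = K * Real.exp (-(γ * t)) / (b - γ) := by rw [h3]

end Aux2

set_option maxHeartbeats 2000000 in
/-- uniformly for `ρ(ε) ≤ ρ̄ < 1`, the `u`-component of the fixed point
stays within `O(ε)` of the constant `u₀` in the `‖·‖_γ^-` norm:
`sup_{t ≤ 0} e^{γt}|u^ε(t;u₀) − u₀| ≤ C ε`. -/
theorem statement16
    (n : ℕ) (hn : 0 < n)
    (A B : Matrix (Fin n) (Fin n) ℝ) (γA' γB : ℝ) (hγA' : 0 < γA') (hγB : 0 < γB)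
    (hA : ∀ t ≤ (0:ℝ), ∀ x : Vec n, ‖mApply (expM A t) x‖ ≤ Real.exp (-γA' * t) * ‖x‖)
    (hB : ∀ t ≥ (0:ℝ), ∀ y : Vec n, ‖mApply (expM B t) y‖ ≤ Real.exp (-γB * t) * ‖y‖)
    (γ : ℝ) (hγ : 0 < γ) (hγγB : γ < γB)
    (f g : Vec n → Vec n → Vec n) (Lf Lg Cf Cg : ℝ)
    (hLf : 0 < Lf) (hLg : 0 < Lg) (hCf : 0 < Cf) (hCg : 0 < Cg)
    (hfLip : ∀ x₁ y₁ x₂ y₂ : Vec n,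
      ‖f x₁ y₁ - f x₂ y₂‖ ≤ Lf * (‖x₁ - x₂‖ + ‖y₁ - y₂‖))
    (hgLip : ∀ x₁ y₁ x₂ y₂ : Vec n,
      ‖g x₁ y₁ - g x₂ y₂‖ ≤ Lg * (‖x₁ - x₂‖ + ‖y₁ - y₂‖))
    (hfGrow : ∀ x y : Vec n, ‖f x y‖ ≤ Lf * (Cf + ‖x‖ + ‖y‖))
    (hgGrow : ∀ x y : Vec n, ‖g x y‖ ≤ Lg * (Cg + ‖x‖ + ‖y‖))
    (η ξ : ℝ → Vec n) (hη : memCneg γ η) (hξ : memCneg γ ξ)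
    (ρbar : ℝ) (hρbar : ρbar ∈ Ioo (0:ℝ) 1)
    (u₀ : Vec n) :
    ∃ C : ℝ, 0 ≤ C ∧
      ∀ ε : ℝ, 0 < ε → ε * γA' < γ →
        ε * Lf / (γ - ε * γA') + Lg / (γB - γ) ≤ ρbar →
        ∀ u v : ℝ → Vec n, IsLPFixedPt γ A B ε f g η ξ u₀ u v →
          ∀ t ≤ (0:ℝ), Real.exp (γ * t) * ‖u t - u₀‖ ≤ C * ε := by
  obtain ⟨hρ0, hρ1⟩ := hρbar
  obtain ⟨hηc, hηb⟩ := hη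
  obtain ⟨hξc, hξb⟩ := hξ
  have hNη0 : 0 ≤ cNorm γ η := cNorm_nonneg hηb
  have hNξ0 : 0 ≤ cNorm γ ξ := cNorm_nonneg hξb
  set Nη := cNorm γ η with hNηdef
  set Nξ := cNorm γ ξ with hNξdef
  have hδ : 0 < γ * Lf / (Lf + ρbar * γA') := by positivity
  set δ := γ * Lf / (Lf + ρbar * γA') with hδdef
  have hM1 : 0 ≤ (‖u₀‖ + ρbar * (Cf + Cg) + ρbar * (Nη + Nξ)) / (1 - ρbar) := by
    apply div_nonneg ?_ (by linarith)
    have := norm_nonneg u₀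
    nlinarith
  set M1 := (‖u₀‖ + ρbar * (Cf + Cg) + ρbar * (Nη + Nξ)) / (1 - ρbar) with hM1def
  set M2 := M1 + Nη + Nξ with hM2def
  have hM2 : 0 ≤ M2 := by rw [hM2def]; linarith
  have hC0 : 0 ≤ (‖mApply A u₀‖ + Lf * (Cf + M2)) / δ := by
    apply div_nonneg ?_ hδ.le
    have := norm_nonneg (mApply A u₀)
    nlinarith
  refine ⟨(‖mApply A u₀‖ + Lf * (Cf + M2)) / δ, hC0, ?_⟩
  intro ε hε hεγ hρ u v hfix t ht
  obtain ⟨⟨huc, hub⟩, ⟨hvc, hvb⟩, hKAeq, hKBall⟩ := hfix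
  set c := γ - ε * γA' with hcdef
  have hc : 0 < c := by rw [hcdef]; linarith
  have hρA0 : 0 < ε * Lf / c := by positivity
  have hγBγ : 0 < γB - γ := by linarith
  have hρB0 : 0 < Lg / (γB - γ) := by positivity
  have hρAB : ε * Lf / c + Lg / (γB - γ) ≤ ρbar := hρ
  have hρA : ε * Lf / c ≤ ρbar := by linarith
  have hρB : Lg / (γB - γ) ≤ ρbar := by linarith
  have hεLf : ε * Lf ≤ ρbar * c := by
    rw [div_le_iff₀ hc] at hρA; linarith
  have hδc : δ ≤ c := by
    rw [hδdef, div_le_iff₀ (by positivity)]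
    have hγc : γ = c + ε * γA' := by rw [hcdef]; ring
    nlinarith
  have hNu0 : 0 ≤ cNorm γ u := cNorm_nonneg hub
  have hNv0 : 0 ≤ cNorm γ v := cNorm_nonneg hvb
  set Nu := cNorm γ u with hNudef
  set Nv := cNorm γ v with hNvdef
  set M := Nu + Nv + Nη + Nξ with hMdef
  have hM0 : 0 ≤ M := by rw [hMdef]; linarith
  clear_value M
  -- pointwise bounds on the nonlinearities
  have hfb : ∀ s ≤ (0:ℝ), ‖f (u s + η s) (v s + ξ s)‖
      ≤ Lf * (Cf + M) * Real.exp (-(γ * s)) := by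
    intro s hs
    have hes : (1:ℝ) ≤ Real.exp (-(γ * s)) := Real.one_le_exp (by nlinarith)
    have h1 : ‖u s + η s‖ ≤ (Nu + Nη) * Real.exp (-(γ * s)) := by
      calc ‖u s + η s‖ ≤ ‖u s‖ + ‖η s‖ := norm_add_le _ _
        _ ≤ Nu * Real.exp (-(γ * s)) + Nη * Real.exp (-(γ * s)) :=
            add_le_add (norm_le_cNorm hub hs) (norm_le_cNorm hηb hs)
        _ = (Nu + Nη) * Real.exp (-(γ * s)) := by ring
    have h2 : ‖v s + ξ s‖ ≤ (Nv + Nξ) * Real.exp (-(γ * s)) := by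
      calc ‖v s + ξ s‖ ≤ ‖v s‖ + ‖ξ s‖ := norm_add_le _ _
        _ ≤ Nv * Real.exp (-(γ * s)) + Nξ * Real.exp (-(γ * s)) :=
            add_le_add (norm_le_cNorm hvb hs) (norm_le_cNorm hξb hs)
        _ = (Nv + Nξ) * Real.exp (-(γ * s)) := by ring
    calc ‖f (u s + η s) (v s + ξ s)‖ ≤ Lf * (Cf + ‖u s + η s‖ + ‖v s + ξ s‖) := hfGrow _ _
      _ ≤ Lf * (Cf + M) * Real.exp (-(γ * s)) := by
          rw [hMdef]
          nlinarith [mul_le_mul_of_nonneg_left h1 hLf.le,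
            mul_le_mul_of_nonneg_left h2 hLf.le,
            mul_le_mul_of_nonneg_left hes (mul_nonneg hLf.le hCf.le)]
  have hgb : ∀ s ≤ (0:ℝ), ‖g (u s + η s) (v s + ξ s)‖
      ≤ Lg * (Cg + M) * Real.exp (-(γ * s)) := by
    intro s hs
    have hes : (1:ℝ) ≤ Real.exp (-(γ * s)) := Real.one_le_exp (by nlinarith)
    have h1 : ‖u s + η s‖ ≤ (Nu + Nη) * Real.exp (-(γ * s)) := by
      calc ‖u s + η s‖ ≤ ‖u s‖ + ‖η s‖ := norm_add_le _ _
        _ ≤ Nu * Real.exp (-(γ * s)) + Nη * Real.exp (-(γ * s)) :=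
            add_le_add (norm_le_cNorm hub hs) (norm_le_cNorm hηb hs)
        _ = (Nu + Nη) * Real.exp (-(γ * s)) := by ring
    have h2 : ‖v s + ξ s‖ ≤ (Nv + Nξ) * Real.exp (-(γ * s)) := by
      calc ‖v s + ξ s‖ ≤ ‖v s‖ + ‖ξ s‖ := norm_add_le _ _
        _ ≤ Nv * Real.exp (-(γ * s)) + Nξ * Real.exp (-(γ * s)) :=
            add_le_add (norm_le_cNorm hvb hs) (norm_le_cNorm hξb hs)
        _ = (Nv + Nξ) * Real.exp (-(γ * s)) := by ring
    calc ‖g (u s + η s) (v s + ξ s)‖ ≤ Lg * (Cg + ‖u s + η s‖ + ‖v s + ξ s‖) := hgGrow _ _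
      _ ≤ Lg * (Cg + M) * Real.exp (-(γ * s)) := by
          rw [hMdef]
          nlinarith [mul_le_mul_of_nonneg_left h1 hLg.le,
            mul_le_mul_of_nonneg_left h2 hLg.le,
            mul_le_mul_of_nonneg_left hes (mul_nonneg hLg.le hCg.le)]
  have hfc : Continuous fun p : Vec n × Vec n => f p.1 p.2 := continuous_of_lip hLf hfLip
  -- the KA integral estimate
  have hKAint : ∀ t' ≤ (0:ℝ), Real.exp (γ * t') *
      ‖∫ s in t'..0, mApply (expM A (ε * (t' - s))) (f (u s + η s) (v s + ξ s))‖
      ≤ Lf * (Cf + M) / c := by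
    intro t' ht'
    have hg1 : ContinuousOn (fun s : ℝ => expM A (ε * (t' - s))) (Icc t' 0) :=
      ((continuous_expM A).comp
        (continuous_const.mul (continuous_const.sub continuous_id))).continuousOn
    have hg2 : ContinuousOn (fun s : ℝ => (u s + η s, v s + ξ s) : ℝ → Vec n × Vec n)
        (Icc t' 0) :=
      ContinuousOn.prodMk
        ((huc.mono Icc_subset_Iic_self).add (hηc.mono Icc_subset_Iic_self))
        ((hvc.mono Icc_subset_Iic_self).add (hξc.mono Icc_subset_Iic_self))
    have hg3 : ContinuousOn (fun s : ℝ => f (u s + η s) (v s + ξ s)) (Icc t' 0) :=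
      hfc.comp_continuousOn hg2
    have hcont : ContinuousOn
        (fun s => mApply (expM A (ε * (t' - s))) (f (u s + η s) (v s + ξ s))) (Icc t' 0) := by
      have h := continuous_mApply2.comp_continuousOn (hg1.prodMk hg3)
      exact h
    have hbnd : ∀ s ∈ Icc t' 0, ‖mApply (expM A (ε * (t' - s))) (f (u s + η s) (v s + ξ s))‖
        ≤ (Lf * (Cf + M) * Real.exp (-(γ * t'))) * Real.exp (c * (t' - s)) := by
      intro s hs
      have hts : ε * (t' - s) ≤ 0 := by nlinarith [hs.1]
      have h1 := hA (ε * (t' - s)) hts (f (u s + η s) (v s + ξ s))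
      have h2 := hfb s hs.2
      have hexpeq : Real.exp (-γA' * (ε * (t' - s))) * Real.exp (-(γ * s))
          = Real.exp (-(γ * t')) * Real.exp (c * (t' - s)) := by
        rw [← Real.exp_add, ← Real.exp_add]; congr 1; rw [hcdef]; ring
      calc ‖mApply (expM A (ε * (t' - s))) (f (u s + η s) (v s + ξ s))‖
          ≤ Real.exp (-γA' * (ε * (t' - s))) * ‖f (u s + η s) (v s + ξ s)‖ := h1
        _ ≤ Real.exp (-γA' * (ε * (t' - s))) * (Lf * (Cf + M) * Real.exp (-(γ * s))) :=
            mul_le_mul_of_nonneg_left h2 (Real.exp_pos _).le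
        _ = Lf * (Cf + M) * (Real.exp (-γA' * (ε * (t' - s))) * Real.exp (-(γ * s))) := by ring
        _ = Lf * (Cf + M) * (Real.exp (-(γ * t')) * Real.exp (c * (t' - s))) := by rw [hexpeq]
        _ = (Lf * (Cf + M) * Real.exp (-(γ * t'))) * Real.exp (c * (t' - s)) := by ring
    have hmain := key_interval ht' hc
      (mul_nonneg (mul_nonneg hLf.le (by linarith only [hM0, hCf])) (Real.exp_pos _).le)
      hcont hbnd
    have h9 : Real.exp (γ * t') * Real.exp (-(γ * t')) = 1 := by
      rw [← Real.exp_add]; simp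
    calc Real.exp (γ * t') *
        ‖∫ s in t'..0, mApply (expM A (ε * (t' - s))) (f (u s + η s) (v s + ξ s))‖
        ≤ Real.exp (γ * t') * ((Lf * (Cf + M) * Real.exp (-(γ * t'))) / c) :=
          mul_le_mul_of_nonneg_left hmain (Real.exp_pos _).le
      _ = Lf * (Cf + M) / c * (Real.exp (γ * t') * Real.exp (-(γ * t'))) := by ring
      _ = Lf * (Cf + M) / c := by rw [h9, mul_one]
  -- a-priori bound on Nu
  have hNu : Nu ≤ ‖u₀‖ + (ε * Lf / c) * (Cf + M) := by
    rw [hNudef, cNorm]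
    refine csSup_le (Set.nonempty_Iic.image _) ?_
    rintro x ⟨t', ht', rfl⟩
    simp only
    replace ht' : t' ≤ 0 := ht'
    rw [hKAeq t' ht']
    rw [KA]
    have hsmul : ‖ε • ∫ s in (0:ℝ)..t',
        mApply (expM A (ε * (t' - s))) (f (u s + η s) (v s + ξ s))‖
        = ε * ‖∫ s in t'..0, mApply (expM A (ε * (t' - s))) (f (u s + η s) (v s + ξ s))‖ := by
      rw [norm_smul, Real.norm_of_nonneg hε.le, intervalIntegral.integral_symm, norm_neg]
    have ht1 : Real.exp (γ * t') * ‖mApply (expM A (ε * t')) u₀‖ ≤ ‖u₀‖ := by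
      have hA1 := hA (ε * t') (by nlinarith) u₀
      have he1 : Real.exp (γ * t') * Real.exp (-γA' * (ε * t')) = Real.exp (c * t') := by
        rw [← Real.exp_add]; congr 1; rw [hcdef]; ring
      have he2 : Real.exp (c * t') ≤ 1 := by
        rw [show (1:ℝ) = Real.exp 0 from (Real.exp_zero).symm]
        exact Real.exp_le_exp.2 (by nlinarith)
      calc Real.exp (γ * t') * ‖mApply (expM A (ε * t')) u₀‖
          ≤ Real.exp (γ * t') * (Real.exp (-γA' * (ε * t')) * ‖u₀‖) :=
            mul_le_mul_of_nonneg_left hA1 (Real.exp_pos _).le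
        _ = Real.exp (γ * t') * Real.exp (-γA' * (ε * t')) * ‖u₀‖ := by ring
        _ = Real.exp (c * t') * ‖u₀‖ := by rw [he1]
        _ ≤ 1 * ‖u₀‖ := mul_le_mul_of_nonneg_right he2 (norm_nonneg _)
        _ = ‖u₀‖ := one_mul _
    have ht2 := hKAint t' ht'
    calc Real.exp (γ * t') * ‖mApply (expM A (ε * t')) u₀ +
          ε • ∫ s in (0:ℝ)..t', mApply (expM A (ε * (t' - s))) (f (u s + η s) (v s + ξ s))‖
        ≤ Real.exp (γ * t') * (‖mApply (expM A (ε * t')) u₀‖ +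
          ‖ε • ∫ s in (0:ℝ)..t', mApply (expM A (ε * (t' - s))) (f (u s + η s) (v s + ξ s))‖) :=
          mul_le_mul_of_nonneg_left (norm_add_le _ _) (Real.exp_pos _).le
      _ = Real.exp (γ * t') * ‖mApply (expM A (ε * t')) u₀‖ +
          ε * (Real.exp (γ * t') *
            ‖∫ s in t'..0, mApply (expM A (ε * (t' - s))) (f (u s + η s) (v s + ξ s))‖) := by
          rw [hsmul]; ring
      _ ≤ ‖u₀‖ + ε * (Lf * (Cf + M) / c) := by
          have := mul_le_mul_of_nonneg_left ht2 hε.le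
          linarith
      _ = ‖u₀‖ + (ε * Lf / c) * (Cf + M) := by ring
  -- a-priori bound on Nv
  have hNv : Nv ≤ (Lg / (γB - γ)) * (Cg + M) := by
    rw [hNvdef, cNorm]
    refine csSup_le (Set.nonempty_Iic.image _) ?_
    rintro x ⟨t', ht', rfl⟩
    simp only
    replace ht' : t' ≤ 0 := ht'
    obtain ⟨hint, heq⟩ := hKBall t' ht'
    rw [heq, KB]
    have hbnd : ∀ s ≤ t', ‖mApply (expM B (t' - s)) (g (u s + η s) (v s + ξ s))‖
        ≤ (Lg * (Cg + M)) * Real.exp (γB * (s - t')) * Real.exp (-(γ * s)) := by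
      intro s hs
      have h1 := hB (t' - s) (by linarith) (g (u s + η s) (v s + ξ s))
      have h2 := hgb s (le_trans hs ht')
      have he : Real.exp (-γB * (t' - s)) = Real.exp (γB * (s - t')) := by congr 1; ring
      calc ‖mApply (expM B (t' - s)) (g (u s + η s) (v s + ξ s))‖
          ≤ Real.exp (-γB * (t' - s)) * ‖g (u s + η s) (v s + ξ s)‖ := h1
        _ ≤ Real.exp (-γB * (t' - s)) * (Lg * (Cg + M) * Real.exp (-(γ * s))) :=
            mul_le_mul_of_nonneg_left h2 (Real.exp_pos _).le
        _ = (Lg * (Cg + M)) * Real.exp (-γB * (t' - s)) * Real.exp (-(γ * s)) := by ring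
        _ = (Lg * (Cg + M)) * Real.exp (γB * (s - t')) * Real.exp (-(γ * s)) := by rw [he]
    have hmain := key_Iic hγ hγγB
      (mul_nonneg hLg.le (by linarith only [hM0, hCg])) hint hbnd
    have h9 : Real.exp (γ * t') * Real.exp (-(γ * t')) = 1 := by
      rw [← Real.exp_add]; simp
    calc Real.exp (γ * t') *
        ‖∫ s in Iic t', mApply (expM B (t' - s)) (g (u s + η s) (v s + ξ s))‖
        ≤ Real.exp (γ * t') * (Lg * (Cg + M) * Real.exp (-(γ * t')) / (γB - γ)) :=
          mul_le_mul_of_nonneg_left hmain (Real.exp_pos _).le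
      _ = Lg * (Cg + M) / (γB - γ) * (Real.exp (γ * t') * Real.exp (-(γ * t'))) := by ring
      _ = (Lg / (γB - γ)) * (Cg + M) := by rw [h9, mul_one]; ring
  -- solve for Nu + Nv
  have hS : Nu + Nv ≤ M1 := by
    have e1 : (ε * Lf / c) * (Cf + M) + (Lg / (γB - γ)) * (Cg + M)
        ≤ ρbar * (Cf + Cg) + ρbar * M := by
      nlinarith only [mul_le_mul_of_nonneg_right hρA hCf.le,
        mul_le_mul_of_nonneg_right hρB hCg.le,
        mul_le_mul_of_nonneg_right hρAB hM0]
    have h1 : Nu + Nv ≤ ‖u₀‖ + ρbar * (Cf + Cg) + ρbar * M := by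
      linarith only [hNu, hNv, e1]
    rw [hM1def, le_div_iff₀ (by linarith : (0:ℝ) < 1 - ρbar)]
    rw [hMdef] at h1
    nlinarith only [h1]
  have hMM2 : M ≤ M2 := by rw [hMdef, hM2def]; linarith
  -- final estimate
  rw [hKAeq t ht, KA]
  have hc0 : Continuous (fun s : ℝ => ε * s) := continuous_const.mul continuous_id
  have hc1 : Continuous (fun s : ℝ => expM A (ε * s)) := by
    have h := (continuous_expM A).comp hc0; exact h
  have hc2 : Continuous (fun s : ℝ => (expM A (ε * s), mApply A u₀)) :=
    hc1.prodMk continuous_const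
  have hc3 : Continuous (fun s : ℝ => mApply (expM A (ε * s)) (mApply A u₀)) := by
    have h := continuous_mApply2.comp hc2; exact h
  have hc4 : Continuous (fun s : ℝ => ε • mApply (expM A (ε * s)) (mApply A u₀)) :=
    hc3.const_smul ε
  have hφ : u₀ - mApply (expM A (ε * t)) u₀
      = ∫ s in t..0, ε • mApply (expM A (ε * s)) (mApply A u₀) := by
    have hder : ∀ s ∈ uIcc t (0:ℝ), HasDerivAt (fun r => mApply (expM A (ε * r)) u₀)
        (ε • mApply (expM A (ε * s)) (mApply A u₀)) s :=
      fun s _ => hasDerivAt_mApply_expM A ε u₀ s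
    have hint : IntervalIntegrable (fun s => ε • mApply (expM A (ε * s)) (mApply A u₀))
        volume t 0 := hc4.intervalIntegrable t 0
    rw [intervalIntegral.integral_eq_sub_of_hasDerivAt hder hint]
    rw [mul_zero, expM_zero, mApply_one]
  have hterm1 : Real.exp (γ * t) * ‖mApply (expM A (ε * t)) u₀ - u₀‖
      ≤ ε * ‖mApply A u₀‖ / c := by
    rw [norm_sub_rev, hφ]
    have hcont : ContinuousOn (fun s => ε • mApply (expM A (ε * s)) (mApply A u₀)) (Icc t 0) :=
      hc4.continuousOn
    have hbnd : ∀ s ∈ Icc t 0, ‖ε • mApply (expM A (ε * s)) (mApply A u₀)‖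
        ≤ (ε * ‖mApply A u₀‖ * Real.exp (-(γ * t))) * Real.exp (c * s) := by
      intro s hs
      have hts : ε * s ≤ 0 := by nlinarith [hs.2]
      have h1 := hA (ε * s) hts (mApply A u₀)
      have he1 : Real.exp (-γA' * (ε * s)) = Real.exp (c * s) * Real.exp (-(γ * s)) := by
        rw [← Real.exp_add]; congr 1; rw [hcdef]; ring
      have he2 : Real.exp (-(γ * s)) ≤ Real.exp (-(γ * t)) :=
        Real.exp_le_exp.2 (by nlinarith [hs.1])
      calc ‖ε • mApply (expM A (ε * s)) (mApply A u₀)‖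
          = ε * ‖mApply (expM A (ε * s)) (mApply A u₀)‖ := by
            rw [norm_smul, Real.norm_of_nonneg hε.le]
        _ ≤ ε * (Real.exp (-γA' * (ε * s)) * ‖mApply A u₀‖) :=
            mul_le_mul_of_nonneg_left h1 hε.le
        _ = ε * ‖mApply A u₀‖ * Real.exp (c * s) * Real.exp (-(γ * s)) := by rw [he1]; ring
        _ ≤ ε * ‖mApply A u₀‖ * Real.exp (c * s) * Real.exp (-(γ * t)) := by
            have : 0 ≤ ε * ‖mApply A u₀‖ * Real.exp (c * s) := by positivity
            exact mul_le_mul_of_nonneg_left he2 this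
        _ = (ε * ‖mApply A u₀‖ * Real.exp (-(γ * t))) * Real.exp (c * s) := by ring
    have hmain := key_interval' ht hc (by positivity) hcont hbnd
    have h9 : Real.exp (γ * t) * Real.exp (-(γ * t)) = 1 := by
      rw [← Real.exp_add]; simp
    calc Real.exp (γ * t) * ‖∫ s in t..0, ε • mApply (expM A (ε * s)) (mApply A u₀)‖
        ≤ Real.exp (γ * t) * ((ε * ‖mApply A u₀‖ * Real.exp (-(γ * t))) / c) :=
          mul_le_mul_of_nonneg_left hmain (Real.exp_pos _).le
      _ = ε * ‖mApply A u₀‖ / c * (Real.exp (γ * t) * Real.exp (-(γ * t))) := by ring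
      _ = ε * ‖mApply A u₀‖ / c := by rw [h9, mul_one]
  have hsmul : ‖ε • ∫ s in (0:ℝ)..t,
      mApply (expM A (ε * (t - s))) (f (u s + η s) (v s + ξ s))‖
      = ε * ‖∫ s in t..0, mApply (expM A (ε * (t - s))) (f (u s + η s) (v s + ξ s))‖ := by
    rw [norm_smul, Real.norm_of_nonneg hε.le, intervalIntegral.integral_symm, norm_neg]
  have hterm2 := hKAint t ht
  have hsplit : ‖(mApply (expM A (ε * t)) u₀ +
        ε • ∫ s in (0:ℝ)..t, mApply (expM A (ε * (t - s))) (f (u s + η s) (v s + ξ s))) - u₀‖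
      ≤ ‖mApply (expM A (ε * t)) u₀ - u₀‖ +
        ‖ε • ∫ s in (0:ℝ)..t, mApply (expM A (ε * (t - s))) (f (u s + η s) (v s + ξ s))‖ := by
    have hre : (mApply (expM A (ε * t)) u₀ +
        ε • ∫ s in (0:ℝ)..t, mApply (expM A (ε * (t - s))) (f (u s + η s) (v s + ξ s))) - u₀
        = (mApply (expM A (ε * t)) u₀ - u₀) +
          ε • ∫ s in (0:ℝ)..t, mApply (expM A (ε * (t - s))) (f (u s + η s) (v s + ξ s)) := by
      abel
    rw [hre]
    exact norm_add_le _ _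
  have hb2 : Lf * (Cf + M) ≤ Lf * (Cf + M2) :=
    mul_le_mul_of_nonneg_left (add_le_add_right hMM2 Cf) hLf.le
  have hb2n : 0 ≤ Lf * (Cf + M2) :=
    le_trans (mul_nonneg hLf.le (by linarith only [hCf, hM0])) hb2
  have i1' : ‖mApply A u₀‖ / c ≤ ‖mApply A u₀‖ / δ :=
    div_le_div₀ (norm_nonneg _) le_rfl hδ hδc
  have i2' : Lf * (Cf + M) / c ≤ Lf * (Cf + M2) / δ := div_le_div₀ hb2n hb2 hδ hδc
  have i1 := mul_le_mul_of_nonneg_left i1' hε.le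
  have i2 := mul_le_mul_of_nonneg_left i2' hε.le
  have h2 := mul_le_mul_of_nonneg_left hterm2 hε.le
  calc Real.exp (γ * t) * ‖(mApply (expM A (ε * t)) u₀ +
        ε • ∫ s in (0:ℝ)..t, mApply (expM A (ε * (t - s))) (f (u s + η s) (v s + ξ s))) - u₀‖
      ≤ Real.exp (γ * t) * (‖mApply (expM A (ε * t)) u₀ - u₀‖ +
        ‖ε • ∫ s in (0:ℝ)..t, mApply (expM A (ε * (t - s))) (f (u s + η s) (v s + ξ s))‖) :=
        mul_le_mul_of_nonneg_left hsplit (Real.exp_pos _).le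
    _ = Real.exp (γ * t) * ‖mApply (expM A (ε * t)) u₀ - u₀‖ +
        ε * (Real.exp (γ * t) *
          ‖∫ s in t..0, mApply (expM A (ε * (t - s))) (f (u s + η s) (v s + ξ s))‖) := by
        rw [hsmul]; ring
    _ ≤ ε * (‖mApply A u₀‖ / c) + ε * (Lf * (Cf + M) / c) := by
        have e : ε * ‖mApply A u₀‖ / c = ε * (‖mApply A u₀‖ / c) := by ring
        linarith only [hterm1, h2, e.symm.le, e.le]
    _ ≤ ε * (‖mApply A u₀‖ / δ) + ε * (Lf * (Cf + M2) / δ) := by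
        linarith only [i1, i2]
    _ = (‖mApply A u₀‖ + Lf * (Cf + M2)) / δ * ε := by ring
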